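/- Euclidean space ℝ^n has asymptotic dimension at most n. -/

import Mathlib

/-- `AsdimLEd d n`: the space with distance function `d` has asymptotic dimension
at most `n`: for every `R > 0` there is a cover by sets of diameter uniformly
bounded by some `B` such that every `R`-ball meets at most `n+1` members. -/
def AsdimLEd {X : Type*} (d : X → X → ℝ) (n : ℕ) : Prop :=
  ∀ R : ℝ, 0 < R → ∃ (𝒰 : Set (Set X)) (B : ℝ),
    (∀ x : X, ∃ u ∈ 𝒰, x ∈ u) ∧
    (∀ u ∈ 𝒰, ∀ x ∈ u, ∀ y ∈ u, d x y ≤ B) ∧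
    (∀ x : X, {u | u ∈ 𝒰 ∧ ∃ y ∈ u, d x y < R}.Finite ∧
      {u | u ∈ 𝒰 ∧ ∃ y ∈ u, d x y < R}.ncard ≤ n + 1)

/-- Asymptotic dimension at most `n` of a (pseudo)metric space. -/
def AsdimLE (X : Type*) [PseudoMetricSpace X] (n : ℕ) : Prop :=
  AsdimLEd (fun x y : X => dist x y) n

/-- `f` is an `(L,C)`-quasi-isometric embedding. -/
def IsQIE {X Y : Type*} [PseudoMetricSpace X] [PseudoMetricSpace Y]
    (f : X → Y) (L C : ℝ) : Prop :=
  ∀ x x' : X, dist x x' / L - C ≤ dist (f x) (f x') ∧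
    dist (f x) (f x') ≤ L * dist x x' + C

/-- A coordinate difference is bounded by the Euclidean distance. -/
lemma euclid_coord_le {n : ℕ} (x y : EuclideanSpace ℝ (Fin n)) (i : Fin n) :
    |x i - y i| ≤ dist x y := by
  rw [EuclideanSpace.dist_eq, ← Real.sqrt_sq_eq_abs]
  apply Real.sqrt_le_sqrt
  have h := Finset.single_le_sum (f := fun i => dist (x i) (y i) ^ 2)
    (fun i _ => sq_nonneg _) (Finset.mem_univ i)
  simpa [Real.dist_eq, sq_abs] using h

/-- Euclidean distance is bounded by `n` times a coordinatewise bound. -/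
lemma euclid_dist_le {n : ℕ} {x y : EuclideanSpace ℝ (Fin n)} {a : ℝ}
    (ha : 0 ≤ a) (h : ∀ i, |x i - y i| ≤ a) : dist x y ≤ n * a := by
  rw [EuclideanSpace.dist_eq]
  have hsum : ∑ i, dist (x i) (y i) ^ 2 ≤ (n : ℝ) * a ^ 2 := by
    calc ∑ i, dist (x i) (y i) ^ 2 ≤ ∑ _i : Fin n, a ^ 2 := by
          apply Finset.sum_le_sum
          intro i _
          rw [Real.dist_eq]
          exact pow_le_pow_left₀ (abs_nonneg _) (h i) 2
      _ = (n : ℝ) * a ^ 2 := by simp [mul_comm]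
  have h2 : (n : ℝ) * a ^ 2 ≤ (n * a) ^ 2 := by
    rcases Nat.eq_zero_or_pos n with h0 | h0
    · simp [h0]
    · have : (1 : ℝ) ≤ n := by exact_mod_cast h0
      nlinarith [sq_nonneg a]
  calc Real.sqrt (∑ i, dist (x i) (y i) ^ 2) ≤ Real.sqrt ((n * a) ^ 2) :=
        Real.sqrt_le_sqrt (le_trans hsum h2)
    _ = |n * a| := Real.sqrt_sq_eq_abs _
    _ = n * a := abs_of_nonneg (by positivity)

/-- The color-`j` cube at lattice position `z`, for scale `R`: side `3nR`,
placed on the lattice `3(n+1)R·ℤⁿ` shifted diagonally by `3Rj`. -/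
def asdimCube (n : ℕ) (R : ℝ) (j : ℕ) (z : Fin n → ℤ) : Set (EuclideanSpace ℝ (Fin n)) :=
  { y | ∀ i, 3 * ((n : ℝ) + 1) * R * z i + 3 * R * j ≤ y i ∧
      y i ≤ 3 * ((n : ℝ) + 1) * R * z i + 3 * R * j + 3 * n * R }

/-- Two same-color cubes meeting a common `R`-ball coincide. -/
lemma asdimCube_unique {n : ℕ} {R : ℝ} (hR : 0 < R) {j : ℕ} {z z' : Fin n → ℤ}
    {x y y' : EuclideanSpace ℝ (Fin n)}
    (hy : y ∈ asdimCube n R j z) (hy' : y' ∈ asdimCube n R j z')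
    (hxy : dist x y < R) (hxy' : dist x y' < R) : z = z' := by
  funext i
  by_contra hne
  have hcoord : |y i - y' i| < 2 * R := by
    have a1 : |y i - x i| ≤ dist y x := euclid_coord_le y x i
    have a2 : |x i - y' i| ≤ dist x y' := euclid_coord_le x y' i
    have h3 : |y i - y' i| ≤ |y i - x i| + |x i - y' i| := abs_sub_le _ _ _
    have hd : dist y x = dist x y := dist_comm y x
    linarith
  have hab := abs_lt.mp hcoord
  have hy1 := hy i
  have hy2 := hy' i
  rcases lt_or_gt_of_ne hne with h | h
  · have hzc : (z i : ℝ) + 1 ≤ (z' i : ℝ) := by exact_mod_cast h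
    have hmul : 3 * ((n : ℝ) + 1) * R * ((z i : ℝ) + 1) ≤ 3 * ((n : ℝ) + 1) * R * (z' i : ℝ) :=
      mul_le_mul_of_nonneg_left hzc (by positivity)
    nlinarith [hy1.2, hy2.1, hab.2]
  · have hzc : (z' i : ℝ) + 1 ≤ (z i : ℝ) := by exact_mod_cast h
    have hmul : 3 * ((n : ℝ) + 1) * R * ((z' i : ℝ) + 1) ≤ 3 * ((n : ℝ) + 1) * R * (z i : ℝ) :=
      mul_le_mul_of_nonneg_left hzc (by positivity)
    nlinarith [hy1.1, hy2.2, hab.1]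

/-- At most one color can be "bad" for a given real coordinate. -/
lemma bad_color_unique {n : ℕ} {R t : ℝ} (hR : 0 < R) {j j' : ℕ}
    (hj : j ≤ n) (hj' : j' ≤ n) {m m' : ℤ}
    (h1 : 3 * (n : ℝ) * R < t - 3 * R * j - 3 * ((n : ℝ) + 1) * R * m)
    (h2 : t - 3 * R * j - 3 * ((n : ℝ) + 1) * R * m < 3 * ((n : ℝ) + 1) * R)
    (h1' : 3 * (n : ℝ) * R < t - 3 * R * j' - 3 * ((n : ℝ) + 1) * R * m')
    (h2' : t - 3 * R * j' - 3 * ((n : ℝ) + 1) * R * m' < 3 * ((n : ℝ) + 1) * R) :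
    j = j' := by
  have key : (j' : ℤ) + ((n : ℤ) + 1) * m' = (j : ℤ) + ((n : ℤ) + 1) * m := by
    have hd : -1 < (((j' : ℤ) + ((n : ℤ) + 1) * m' - ((j : ℤ) + ((n : ℤ) + 1) * m) : ℤ) : ℝ) ∧
        (((j' : ℤ) + ((n : ℤ) + 1) * m' - ((j : ℤ) + ((n : ℤ) + 1) * m) : ℤ) : ℝ) < 1 := by
      constructor <;> · push_cast; nlinarith
    have hd' : -1 < ((j' : ℤ) + ((n : ℤ) + 1) * m' - ((j : ℤ) + ((n : ℤ) + 1) * m)) ∧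
        ((j' : ℤ) + ((n : ℤ) + 1) * m' - ((j : ℤ) + ((n : ℤ) + 1) * m)) < 1 := by
      exact_mod_cast hd
    omega
  have hm := congrArg (fun a => a % ((n : ℤ) + 1)) key
  simp only [Int.add_mul_emod_self_left] at hm
  rw [Int.emod_eq_of_lt (by positivity) (by omega),
    Int.emod_eq_of_lt (by positivity) (by omega)] at hm
  exact_mod_cast hm.symm

/-- Every point lies in a cube of some color (pigeonhole over the `n+1` colors). -/
lemma asdimCube_cover {n : ℕ} {R : ℝ} (hR : 0 < R) (x : EuclideanSpace ℝ (Fin n)) :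
    ∃ j : Fin (n + 1), ∃ z : Fin n → ℤ, x ∈ asdimCube n R (j : ℕ) z := by
  classical
  have hS : (0 : ℝ) < 3 * ((n : ℝ) + 1) * R := by positivity
  set P : Fin (n + 1) → Fin n → Prop := fun j i =>
    3 * (n : ℝ) * R < x i - 3 * R * (j : ℕ) -
      3 * ((n : ℝ) + 1) * R * ⌊(x i - 3 * R * (j : ℕ)) / (3 * ((n : ℝ) + 1) * R)⌋ with hP
  have hfl : ∀ (j : Fin (n + 1)) (i : Fin n),
      3 * ((n : ℝ) + 1) * R * ⌊(x i - 3 * R * (j : ℕ)) / (3 * ((n : ℝ) + 1) * R)⌋ ≤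
        x i - 3 * R * (j : ℕ) ∧
      x i - 3 * R * (j : ℕ) -
        3 * ((n : ℝ) + 1) * R * ⌊(x i - 3 * R * (j : ℕ)) / (3 * ((n : ℝ) + 1) * R)⌋ <
        3 * ((n : ℝ) + 1) * R := by
    intro j i
    set v : ℝ := (x i - 3 * R * (j : ℕ)) / (3 * ((n : ℝ) + 1) * R) with hv
    have hv1 : (⌊v⌋ : ℝ) ≤ v := Int.floor_le v
    have hv2 : v < ⌊v⌋ + 1 := Int.lt_floor_add_one v
    have hev : 3 * ((n : ℝ) + 1) * R * v = x i - 3 * R * (j : ℕ) := by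
      rw [hv, mul_div_assoc']
      exact mul_div_cancel_left₀ _ hS.ne'
    constructor
    · nlinarith [mul_le_mul_of_nonneg_left hv1 hS.le]
    · nlinarith [mul_lt_mul_of_pos_left hv2 hS]
  have huniq : ∀ (j j' : Fin (n + 1)) (i : Fin n), P j i → P j' i → j = j' := by
    intro j j' i hb hb'
    simp only [hP] at hb hb'
    exact Fin.ext (bad_color_unique hR (Nat.lt_succ_iff.mp j.isLt)
      (Nat.lt_succ_iff.mp j'.isLt) (t := x i) hb (hfl j i).2 hb' (hfl j' i).2)
  have hgood : ∃ j : Fin (n + 1), ∀ i : Fin n, ¬ P j i := by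
    by_contra hcon
    push_neg at hcon
    set Bad : Finset (Fin (n + 1)) := Finset.univ.filter (fun j => ∃ i, P j i) with hBad
    have hBadUniv : Bad = Finset.univ := by
      apply Finset.eq_univ_iff_forall.mpr
      intro j
      simp only [hBad, Finset.mem_filter, Finset.mem_univ, true_and]
      exact hcon j
    have himg : Bad ⊆ Finset.univ.image
        (fun i : Fin n => if h : ∃ j : Fin (n + 1), P j i then h.choose else ⟨0, Nat.succ_pos n⟩) := by
      intro j hjmem
      simp only [hBad, Finset.mem_filter, Finset.mem_univ, true_and] at hjmem
      obtain ⟨i, hi⟩ := hjmem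
      apply Finset.mem_image.mpr
      refine ⟨i, Finset.mem_univ i, ?_⟩
      have hex : ∃ j : Fin (n + 1), P j i := ⟨j, hi⟩
      rw [dif_pos hex]
      exact (huniq _ _ i hex.choose_spec hi)
    have hc1 : Bad.card ≤ n := by
      calc Bad.card ≤ _ := Finset.card_le_card himg
        _ ≤ (Finset.univ : Finset (Fin n)).card := Finset.card_image_le
        _ = n := by simp
    rw [hBadUniv] at hc1
    simp at hc1
  obtain ⟨j, hj⟩ := hgood
  refine ⟨j, fun i => ⌊(x i - 3 * R * (j : ℕ)) / (3 * ((n : ℝ) + 1) * R)⌋, fun i => ?_⟩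
  have h1 := (hfl j i).1
  have h2 := hj i
  simp only [hP, not_lt] at h2
  constructor
  · simp only
    linarith
  · simp only
    linarith

/-- Euclidean space `ℝⁿ` has asymptotic dimension at most `n`. -/
theorem asdim_euclidean (n : ℕ) : AsdimLE (EuclideanSpace ℝ (Fin n)) n := by
  intro R hR
  classical
  refine ⟨{ u | ∃ j : Fin (n + 1), ∃ z : Fin n → ℤ, u = asdimCube n R (j : ℕ) z },
    (n : ℝ) * (3 * n * R), ?_, ?_, ?_⟩
  · -- coverage
    intro x
    obtain ⟨j, z, hx⟩ := asdimCube_cover hR x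
    exact ⟨asdimCube n R (j : ℕ) z, ⟨j, z, rfl⟩, hx⟩
  · -- uniform boundedness
    rintro u ⟨j, z, rfl⟩ y hy y' hy'
    refine euclid_dist_le (by positivity) ?_
    intro i
    have h1 := hy i
    have h2 := hy' i
    rw [abs_le]
    constructor <;> linarith [h1.1, h1.2, h2.1, h2.2]
  · -- multiplicity: at most one cube of each color meets the `R`-ball
    intro x
    set g : Fin (n + 1) → Set (EuclideanSpace ℝ (Fin n)) := fun j =>
      if h : ∃ z : Fin n → ℤ, ∃ y ∈ asdimCube n R (j : ℕ) z, dist x y < R then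
        asdimCube n R (j : ℕ) h.choose else ∅ with hg
    have hsub : {u | u ∈ { u | ∃ j : Fin (n + 1), ∃ z : Fin n → ℤ,
        u = asdimCube n R (j : ℕ) z } ∧ ∃ y ∈ u, dist x y < R} ⊆ Set.range g := by
      rintro u ⟨⟨j, z, rfl⟩, y, hyu, hyx⟩
      refine ⟨j, ?_⟩
      have hex : ∃ z : Fin n → ℤ, ∃ y ∈ asdimCube n R (j : ℕ) z, dist x y < R :=
        ⟨z, y, hyu, hyx⟩
      simp only [hg, dif_pos hex]
      obtain ⟨y', hy'u, hy'x⟩ := hex.choose_spec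
      exact congrArg _ (asdimCube_unique hR hy'u hyu hy'x hyx)
    have hfin := (Set.finite_range g).subset hsub
    refine ⟨hfin, ?_⟩
    calc _ ≤ (Set.range g).ncard := Set.ncard_le_ncard hsub (Set.finite_range g)
      _ ≤ (Set.univ : Set (Fin (n + 1))).ncard := by
          rw [← Set.image_univ]
          exact Set.ncard_image_le Set.finite_univ
      _ = n + 1 := by simp [Set.ncard_univ]
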